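/- Let A be a C*-algebra and let (pₙ)_{n∈ℕ} be an increasing approximate unit for A consisting of projections; that is, each pₙ is a projection, pₙ pₘ = pₙ whenever n ≤ m, and ‖pₙ a − a‖ → 0 for every a ∈ A. Then the following are equivalent: (ii) for every projection p ∈ A there exists a projection q ∈ A with p ∼ q and pq = 0; (iii) for every n ∈ ℕ there exists m > n and an element v ∈ A with v v* = pₙ and v* v ≤ pₘ − pₙ. -/

import Mathlib

open StarAlgebra in
lemma commute_cfc_of_commute {B : Type*} [CStarAlgebra B] {a b : B}
    (ha : IsSelfAdjoint a) (hab : Commute b a) (f : ℝ → ℝ) :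
    Commute b (cfc f a) := by
  have hstar : Commute b (star a) := by rwa [ha.star_eq]
  have key : ∀ y ∈ elemental ℂ a, Commute b y := by
    intro y hy
    induction hy using elemental.induction_on with
    | self => exact hab
    | star_self => exact hstar
    | algebraMap r => exact (Algebra.commutes r b).symm
    | add u hu v hv h1 h2 => exact h1.add_right h2
    | mul u hu v hv h1 h2 => exact h1.mul_right h2
    | closure s hs hmem v hv =>
        have hclosed : IsClosed {x : B | Commute b x} := by
          simp only [Commute, SemiconjBy]
          exact isClosed_eq (continuous_const.mul continuous_id)
            (continuous_id.mul continuous_const)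
        exact closure_minimal (fun x hx => hmem x hx) hclosed hv
  rw [cfc_real_eq_complex f ha]
  have hnormal : IsStarNormal a := ha.isStarNormal
  by_cases hf : ContinuousOn (fun x : ℂ => (f x.re : ℂ)) (spectrum ℂ a)
  · rw [cfc_apply _ a hnormal hf]
    apply key
    rw [cfcHom_eq_of_isStarNormal]
    exact SetLike.coe_mem _
  · rw [cfc_apply_of_not_continuousOn a hf]
    exact Commute.zero_right b

lemma invsqrt {B : Type*} [CStarAlgebra B] [PartialOrder B] [StarOrderedRing B] [Nontrivial B]
    {D : B} (hD0 : 0 ≤ D) (hD : ‖D‖ ≤ 1/5) :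
    ∃ c : B, IsSelfAdjoint c ∧ c * c * (1 - D) = 1 ∧ (1 - D) * (c * c) = 1 ∧
      (∀ b : B, Commute b D → Commute b c) ∧
      ‖c‖ ≤ 9/8 ∧ ‖c - 1‖ ≤ 1/8 := by
  have hDsa : IsSelfAdjoint D := .of_nonneg hD0
  set X : B := 1 - D with hXdef
  have hX : IsSelfAdjoint X := (IsSelfAdjoint.one B).sub hDsa
  have hspec : spectrum ℝ X ⊆ Set.Icc (4/5 : ℝ) 1 := by
    intro x hx
    have hX' : X = algebraMap ℝ B 1 - D := by simp [hXdef]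
    rw [hX', ← spectrum.singleton_sub_eq] at hx
    obtain ⟨y, hy, z, hz, rfl⟩ := Set.mem_sub.mp hx
    obtain rfl : y = 1 := hy
    have hz0 : 0 ≤ z := spectrum_nonneg_of_nonneg hD0 hz
    have hz1 : z ≤ 1/5 := le_trans (le_trans (le_abs_self z)
      (spectrum.norm_le_norm_of_mem hz)) hD
    constructor <;> linarith
  have hXsa := hX
  set f : ℝ → ℝ := fun t => (Real.sqrt t)⁻¹ with hfdef
  have hfc : ContinuousOn f (spectrum ℝ X) := by
    intro t ht
    have ht' := hspec ht
    have h0 : Real.sqrt t ≠ 0 := by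
      have : (0:ℝ) < t := lt_of_lt_of_le (by norm_num) ht'.1
      positivity
    exact ((Real.continuous_sqrt.continuousAt).inv₀ h0).continuousWithinAt
  set c : B := cfc f X with hcdef
  have hXc : Commute X c := by
    have h := cfc_commute_cfc id f X
    rwa [cfc_id ℝ X hX] at h
  have hmul : c * c * X = 1 := by
    have h1 : Set.EqOn (fun x => f x * f x * id x) (fun _ : ℝ => (1:ℝ)) (spectrum ℝ X) := by
      intro t ht
      have ht' := hspec ht
      have ht0 : (0:ℝ) < t := lt_of_lt_of_le (by norm_num) ht'.1
      have hs : Real.sqrt t * Real.sqrt t = t := Real.mul_self_sqrt ht0.le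
      have hsne : Real.sqrt t ≠ 0 := by positivity
      simp only [hfdef, id]
      field_simp
      rw [sq, hs]
    calc c * c * X = cfc (fun x => f x * f x) X * cfc id X := by
          rw [hcdef, ← cfc_mul f f X hfc hfc, cfc_id ℝ X hX]
      _ = cfc (fun x => f x * f x * id x) X := by
          rw [← cfc_mul (fun x => f x * f x) id X (hfc.mul hfc) continuousOn_id]
      _ = cfc (fun _ : ℝ => (1:ℝ)) X := cfc_congr h1
      _ = 1 := cfc_one ℝ X hX
  have hmul' : X * (c * c) = 1 := by
    have h := hXc.eq
    calc X * (c*c) = (X*c)*c := by rw [mul_assoc]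
      _ = (c*X)*c := by rw [h]
      _ = c*(X*c) := by rw [mul_assoc]
      _ = c*(c*X) := by rw [h]
      _ = c*c*X := by rw [mul_assoc]
      _ = 1 := hmul
  have hnorm : ‖c‖ ≤ 9/8 := by
    apply norm_cfc_le (by norm_num)
    intro x hx
    have hx' := hspec hx
    have h89 : (8/9:ℝ) ≤ Real.sqrt x := by
      rw [show (8/9:ℝ) = Real.sqrt ((8/9)^2) by rw [Real.sqrt_sq (by norm_num)]]
      exact Real.sqrt_le_sqrt (by nlinarith [hx'.1])
    have hpos : (0:ℝ) < Real.sqrt x := by linarith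
    rw [Real.norm_eq_abs, abs_of_nonneg (by positivity)]
    calc (Real.sqrt x)⁻¹ ≤ (8/9:ℝ)⁻¹ := by gcongr
      _ ≤ 9/8 := by norm_num
  have hnorm1 : ‖c - 1‖ ≤ 1/8 := by
    have hone : (1:B) = cfc (fun _ : ℝ => (1:ℝ)) X := (cfc_one ℝ X hX).symm
    rw [hcdef, hone, ← cfc_sub _ _ X hfc continuousOn_const]
    apply norm_cfc_le (by norm_num)
    intro x hx
    have hx' := hspec hx
    have h89 : (8/9:ℝ) ≤ Real.sqrt x := by
      rw [show (8/9:ℝ) = Real.sqrt ((8/9)^2) by rw [Real.sqrt_sq (by norm_num)]]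
      exact Real.sqrt_le_sqrt (by nlinarith [hx'.1])
    have hpos : (0:ℝ) < Real.sqrt x := by linarith
    have hle1 : Real.sqrt x ≤ 1 := Real.sqrt_le_one.mpr hx'.2
    have hlow : (1:ℝ) ≤ (Real.sqrt x)⁻¹ := by
      have hinv : (Real.sqrt x)⁻¹ * Real.sqrt x = 1 := inv_mul_cancel₀ (by positivity)
      nlinarith [inv_nonneg.mpr hpos.le]
    have hup : (Real.sqrt x)⁻¹ ≤ 9/8 := by
      calc (Real.sqrt x)⁻¹ ≤ (8/9:ℝ)⁻¹ := by gcongr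
        _ ≤ 9/8 := by norm_num
    rw [Real.norm_eq_abs, abs_of_nonneg (by simp only [hfdef]; linarith)]
    simp only [hfdef]
    linarith
  exact ⟨c, cfc_predicate f X, hmul, hmul', fun b hb =>
    commute_cfc_of_commute hX ((Commute.one_right b).sub_right hb) f, hnorm, hnorm1⟩

lemma proj_norm_le_one {B : Type*} [NonUnitalNormedRing B] [StarRing B] [CStarRing B] {r : B}
    (hr : IsSelfAdjoint r) (hr2 : r * r = r) : ‖r‖ ≤ 1 := by
  by_cases h : ‖r‖ = 0
  · rw [h]; norm_num
  · have h2 := CStarRing.norm_star_mul_self (x := r)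
    rw [hr.star_eq, hr2] at h2
    nlinarith [norm_nonneg r]

lemma main_construction {B : Type*} [CStarAlgebra B] [PartialOrder B] [StarOrderedRing B]
    [Nontrivial B] {r g : B}
    (hr : IsSelfAdjoint r) (hr2 : r * r = r) (hg : IsSelfAdjoint g) (hg2 : g * g = g)
    (hδ : ‖g * r - r‖ ≤ 1/20) :
    ∃ w : B, star w * w = r ∧ w * r = w ∧
      IsSelfAdjoint (w * star w) ∧ (w * star w) * (w * star w) = w * star w ∧
      g * (w * star w) = w * star w ∧ (w * star w) * g = w * star w ∧
      ‖w * star w - r‖ ≤ 29/80 ∧ ∃ c : B, w = g * (r * c) := by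
  have hrn : ‖r‖ ≤ 1 := proj_norm_le_one hr hr2
  set d : B := r - r * (g * r) with hddef
  have hd0 : 0 ≤ d := by
    have key : d = star ((1 - g) * r) * ((1 - g) * r) := by
      have h1 : (1 - g) * (1 - g) = 1 - g := by
        simp only [mul_sub, sub_mul, one_mul, mul_one, hg2]; abel
      simp only [star_mul, star_sub, star_one, hr.star_eq, hg.star_eq]
      calc d = r * r - r * (g * r) := by rw [hddef, hr2]
        _ = r * ((1 - g) * (1 - g)) * r := by rw [h1]; noncomm_ring
        _ = r * (1 - g) * ((1 - g) * r) := by noncomm_ring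
    rw [key]
    exact star_mul_self_nonneg _
  have hrd : r * d = d := by
    rw [hddef, mul_sub, ← mul_assoc, hr2]
  have hdr : d * r = d := by
    rw [hddef, sub_mul, hr2, mul_assoc, mul_assoc, hr2]
  have hdn : ‖d‖ ≤ 1/20 := by
    have key : d = -(r * (g * r - r)) := by
      rw [hddef, mul_sub, hr2, neg_sub]
    rw [key, norm_neg]
    calc ‖r * (g * r - r)‖ ≤ ‖r‖ * ‖g * r - r‖ := norm_mul_le _ _
      _ ≤ 1 * (1/20) := mul_le_mul hrn hδ (norm_nonneg _) zero_le_one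
      _ = 1/20 := by norm_num
  obtain ⟨c, hcsa, hccX, hXcc, hcomm, hcn, hc1⟩ := invsqrt hd0 (le_trans hdn (by norm_num))
  set X : B := 1 - d with hXdef
  have hrX : Commute r d := by rw [Commute, SemiconjBy, hrd, hdr]
  have hrc : Commute r c := hcomm r hrX
  have hdc : Commute d c := hcomm d (Commute.refl d)
  have hXc : X * c = c * X := by
    rw [hXdef, sub_mul, mul_sub, one_mul, mul_one, hdc.eq]
  have hcXc : c * (X * c) = 1 := by
    rw [hXc, ← mul_assoc, hccX]
  have hXr : X * r = r * (g * r) := by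
    rw [hXdef, sub_mul, one_mul, hdr, hddef]; abel
  set w : B := g * (r * c) with hwdef
  have hg2tail : ∀ x : B, g * (g * x) = g * x := fun x => by rw [← mul_assoc, hg2]
  have hsw : star w = c * (r * g) := by
    simp only [hwdef, star_mul, hr.star_eq, hg.star_eq, hcsa.star_eq, mul_assoc]
  have hw1 : star w * w = r := by
    calc star w * w = c * (r * (g * (g * (r * c)))) := by rw [hsw, hwdef]; simp only [mul_assoc]
      _ = c * (r * (g * (r * c))) := by rw [hg2tail]
      _ = c * ((r * (g * r)) * c) := by simp only [mul_assoc]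
      _ = c * ((X * r) * c) := by rw [hXr]
      _ = c * (X * (c * r)) := by rw [mul_assoc, hrc.eq]
      _ = (c * (X * c)) * r := by simp only [mul_assoc]
      _ = r := by rw [hcXc, one_mul]
  have hw2 : w * r = w := by
    calc w * r = g * (r * (c * r)) := by rw [hwdef]; simp only [mul_assoc]
      _ = g * (r * (r * c)) := by rw [← hrc.eq]
      _ = g * (r * c) := by rw [← mul_assoc r r c, hr2]
  have hw1tail : ∀ x : B, star w * (w * x) = r * x := fun x => by rw [← mul_assoc, hw1]
  have hesa : IsSelfAdjoint (w * star w) := by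
    have : star (w * star w) = w * star w := by rw [star_mul, star_star]
    exact this
  have he2 : (w * star w) * (w * star w) = w * star w := by
    calc (w * star w) * (w * star w) = w * (star w * (w * star w)) := by simp only [mul_assoc]
      _ = w * (r * star w) := by rw [hw1tail]
      _ = (w * r) * star w := by simp only [mul_assoc]
      _ = w * star w := by rw [hw2]
  have hge : g * (w * star w) = w * star w := by
    calc g * (w * star w) = g * (g * (r * (c * star w))) := by
          rw [hwdef]; simp only [mul_assoc]
      _ = g * (r * (c * star w)) := by rw [hg2tail]
      _ = w * star w := by rw [hwdef]; simp only [mul_assoc]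
  have hswg : star w * g = star w := by
    calc star w * g = c * (r * (g * g)) := by rw [hsw]; simp only [mul_assoc]
      _ = c * (r * g) := by rw [hg2]
      _ = star w := hsw.symm
  have heg : (w * star w) * g = w * star w := by
    rw [mul_assoc, hswg]
  have hwr : ‖w - r‖ ≤ 29/160 := by
    have key : w - r = (g * r - r) * c + r * (c - 1) := by
      rw [sub_mul, mul_sub, mul_one, hwdef, ← mul_assoc]; abel
    rw [key]
    calc ‖(g * r - r) * c + r * (c - 1)‖ ≤ ‖(g * r - r) * c‖ + ‖r * (c - 1)‖ := norm_add_le _ _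
      _ ≤ ‖g * r - r‖ * ‖c‖ + ‖r‖ * ‖c - 1‖ := add_le_add (norm_mul_le _ _) (norm_mul_le _ _)
      _ ≤ (1/20) * (9/8) + 1 * (1/8) := add_le_add
          (mul_le_mul hδ hcn (norm_nonneg _) (by norm_num))
          (mul_le_mul hrn hc1 (norm_nonneg _) (by norm_num))
      _ ≤ 29/160 := by norm_num
  have hwn : ‖w‖ ≤ 1 := by
    have h2 := CStarRing.norm_star_mul_self (x := w)
    rw [hw1] at h2
    nlinarith [norm_nonneg w, hrn, norm_nonneg r]
  have hswr : ‖star w - r‖ ≤ 29/160 := by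
    rw [show star w - r = star (w - r) by rw [star_sub, hr.star_eq]]
    rwa [norm_star]
  have hnorm : ‖w * star w - r‖ ≤ 29/80 := by
    have key : w * star w - r = w * (star w - r) + (w - r) * r := by
      rw [mul_sub, sub_mul, hr2]; abel
    rw [key]
    calc ‖w * (star w - r) + (w - r) * r‖ ≤ ‖w * (star w - r)‖ + ‖(w - r) * r‖ := norm_add_le _ _
      _ ≤ ‖w‖ * ‖star w - r‖ + ‖w - r‖ * ‖r‖ := add_le_add (norm_mul_le _ _) (norm_mul_le _ _)
      _ ≤ 1 * (29/160) + (29/160) * 1 := add_le_add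
          (mul_le_mul hwn hswr (norm_nonneg _) (by norm_num))
          (mul_le_mul hwr hrn (norm_nonneg _) (by norm_num))
      _ ≤ 29/80 := by norm_num
  exact ⟨w, hw1, hw2, hesa, he2, hge, heg, hnorm, c, hwdef⟩

lemma exists_unitary {B : Type*} [CStarAlgebra B] [PartialOrder B] [StarOrderedRing B]
    [Nontrivial B] {q e : B}
    (hq : IsSelfAdjoint q) (hq2 : q * q = q) (he : IsSelfAdjoint e) (he2 : e * e = e)
    (hne : ‖e - q‖ ≤ 29/80) :
    ∃ u : B, star u * u = 1 ∧ u * star u = 1 ∧ u * q = e * u := by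
  have hq2tail : ∀ x : B, q * (q * x) = q * x := fun x => by rw [← mul_assoc, hq2]
  have he2tail : ∀ x : B, e * (e * x) = e * x := fun x => by rw [← mul_assoc, he2]
  set D : B := (q - e) * (q - e) with hDdef
  have hD0 : 0 ≤ D := by
    have key : D = star (q - e) * (q - e) := by rw [star_sub, hq.star_eq, he.star_eq]
    rw [key]; exact star_mul_self_nonneg _
  have hDn : ‖D‖ ≤ 1/5 := by
    calc ‖D‖ ≤ ‖q - e‖ * ‖q - e‖ := norm_mul_le _ _
      _ = ‖e - q‖ * ‖e - q‖ := by rw [norm_sub_rev]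
      _ ≤ (29/80) * (29/80) := mul_le_mul hne hne (norm_nonneg _) (by norm_num)
      _ ≤ 1/5 := by norm_num
  set k : B := e * q + (1 - e) * (1 - q) with hkdef
  have hsk : star k = q * e + (1 - q) * (1 - e) := by
    simp only [hkdef, star_add, star_mul, star_sub, star_one, hq.star_eq, he.star_eq]
  have hkk : star k * k = 1 - D := by
    rw [hsk, hkdef, hDdef]
    simp only [mul_sub, sub_mul, mul_add, add_mul, mul_one, one_mul, mul_assoc,
      hq2tail, he2tail, hq2, he2]
    abel
  have hkk' : k * star k = 1 - D := by
    rw [hsk, hkdef, hDdef]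
    simp only [mul_sub, sub_mul, mul_add, add_mul, mul_one, one_mul, mul_assoc,
      hq2tail, he2tail, hq2, he2]
    abel
  have hqD : Commute q D := by
    rw [Commute, SemiconjBy, hDdef]
    simp only [mul_sub, sub_mul, mul_assoc, hq2tail, he2tail, hq2, he2]
    abel
  have hkD : Commute k D := by
    have h1 : k * (star k * k) = (k * star k) * k := by simp only [mul_assoc]
    rw [hkk, hkk'] at h1
    rw [mul_sub, sub_mul, mul_one, one_mul] at h1
    rw [Commute, SemiconjBy]
    exact sub_right_injective h1
  obtain ⟨c, hcsa, hccZ, hZcc, hcomm, -, -⟩ := invsqrt hD0 hDn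
  have hqc : Commute q c := hcomm q hqD
  have hkc : Commute k c := hcomm k hkD
  have hDc : Commute D c := hcomm D (Commute.refl D)
  have hZc : (1 - D) * c = c * (1 - D) := by
    rw [sub_mul, mul_sub, one_mul, mul_one, hDc.eq]
  refine ⟨k * c, ?_, ?_, ?_⟩
  · have hsu : star (k * c) = c * star k := by rw [star_mul, hcsa.star_eq]
    calc star (k * c) * (k * c) = c * ((star k * k) * c) := by rw [hsu]; simp only [mul_assoc]
      _ = c * ((1 - D) * c) := by rw [hkk]
      _ = c * (c * (1 - D)) := by rw [hZc]
      _ = c * c * (1 - D) := by simp only [mul_assoc]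
      _ = 1 := hccZ
  · have hsu : star (k * c) = c * star k := by rw [star_mul, hcsa.star_eq]
    calc (k * c) * star (k * c) = k * ((c * c) * star k) := by rw [hsu]; simp only [mul_assoc]
      _ = ((c * c) * k) * star k := by rw [← mul_assoc, (hkc.mul_right hkc).eq]
      _ = (c * c) * (k * star k) := by simp only [mul_assoc]
      _ = (c * c) * (1 - D) := by rw [hkk']
      _ = 1 := hccZ
  · have hkq : k * q = e * q := by
      rw [hkdef]
      simp only [mul_sub, sub_mul, mul_add, add_mul, mul_one, one_mul, mul_assoc,
        hq2tail, he2tail, hq2, he2]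
      abel
    have hek : e * k = e * q := by
      rw [hkdef]
      simp only [mul_sub, sub_mul, mul_add, add_mul, mul_one, one_mul, mul_assoc,
        hq2tail, he2tail, hq2, he2]
      abel
    calc (k * c) * q = k * (c * q) := by rw [mul_assoc]
      _ = k * (q * c) := by rw [← hqc.eq]
      _ = (k * q) * c := by rw [mul_assoc]
      _ = (e * q) * c := by rw [hkq]
      _ = (e * k) * c := by rw [hek]
      _ = e * (k * c) := by rw [mul_assoc]

lemma proj_le_proj {B : Type*} [Ring B] [PartialOrder B] [StarRing B] [StarOrderedRing B]
    {e g : B} (hesa : IsSelfAdjoint e) (hgsa : IsSelfAdjoint g) (he2 : e * e = e)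
    (hg2 : g * g = g) (hge : g * e = e) (heg : e * g = e) : e ≤ g := by
  rw [← sub_nonneg]
  have key : g - e = star (g - e) * (g - e) := by
    rw [star_sub, hesa.star_eq, hgsa.star_eq, mul_sub, sub_mul, sub_mul, hg2, hge, heg, he2]
    abel
  rw [key]
  exact star_mul_self_nonneg _

lemma mul_proj_eq_self {B : Type*} [CStarAlgebra B] [PartialOrder B] [StarOrderedRing B]
    {v g : B} (hgsa : IsSelfAdjoint g) (hg2 : g * g = g) (hle : star v * v ≤ g) :
    v * g = v := by
  have hsg : star (1 - g) = 1 - g := by rw [star_sub, star_one, hgsa.star_eq]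
  have h1 : star (v * (1 - g)) * (v * (1 - g)) ≤ 0 := by
    have h2 := star_left_conjugate_le_conjugate hle (1 - g)
    rw [hsg] at h2
    have h3 : star (v * (1 - g)) * (v * (1 - g)) = (1 - g) * (star v * v) * (1 - g) := by
      rw [star_mul, hsg]; simp only [mul_assoc]
    have h4 : (1 - g) * g * (1 - g) = 0 := by
      rw [sub_mul, one_mul, hg2, sub_self, zero_mul]
    rw [h3]
    rw [h4] at h2
    exact h2
  have h5 : v * (1 - g) = 0 := by
    rw [← CStarRing.star_mul_self_eq_zero_iff]
    exact le_antisymm h1 (star_mul_self_nonneg _)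
  rw [mul_sub, mul_one, sub_eq_zero] at h5
  exact h5.symm


/-- Let `A` be a C⋆-algebra with an increasing countable approximate unit `(pₙ)`
consisting of projections.  Then every projection of `A` is equivalent to an orthogonal
projection if and only if for every `n` there is `m > n` with `pₙ ≲ pₘ - pₙ`. -/
theorem exists_orthogonal_equiv_iff_approxUnit_subequiv
    {A : Type*} [NonUnitalCStarAlgebra A] [PartialOrder A] [StarOrderedRing A]
    (p : ℕ → A)
    (hproj : ∀ n : ℕ, IsSelfAdjoint (p n) ∧ p n * p n = p n)
    (hincr : ∀ n m : ℕ, n ≤ m → p n * p m = p n)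
    (happrox : ∀ a : A,
      Filter.Tendsto (fun n : ℕ => ‖p n * a - a‖) Filter.atTop (nhds 0)) :
    (∀ q : A, IsSelfAdjoint q → q * q = q →
        ∃ q' : A, (IsSelfAdjoint q' ∧ q' * q' = q') ∧
          (∃ v : A, q = v * star v ∧ q' = star v * v) ∧ q * q' = 0) ↔
      (∀ n : ℕ, ∃ m : ℕ, n < m ∧
        ∃ v : A, v * star v = p n ∧ star v * v ≤ p m - p n) := by
  have hsa : ∀ n, IsSelfAdjoint (p n) := fun n => (hproj n).1
  have hmul : ∀ n m, n ≤ m → p m * p n = p n := fun n m h => by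
    have h2 := congrArg star (hincr n m h)
    rwa [star_mul, (hsa n).star_eq, (hsa m).star_eq] at h2
  have hgproj : ∀ n m, n ≤ m → (p m - p n) * (p m - p n) = p m - p n := fun n m h => by
    rw [mul_sub, sub_mul, sub_mul, (hproj m).2, hincr n m h, hmul n m h, (hproj n).2]
    abel
  have inr_sa : ∀ {a : A}, IsSelfAdjoint a → IsSelfAdjoint (a : Unitization ℂ A) :=
    fun {a} ha => (Unitization.isSelfAdjoint_inr (R := ℂ)).mpr ha
  have inr_idem : ∀ {a : A}, a * a = a →
      ((a : Unitization ℂ A) * (a : Unitization ℂ A) = (a : Unitization ℂ A)) :=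
    fun {a} ha => by rw [← Unitization.inr_mul, ha]
  constructor
  · intro hii n
    obtain ⟨q', ⟨hq'sa, hq'2⟩, ⟨v₀, hv₀, hq'v⟩, horth⟩ := hii (p n) (hsa n) ((hproj n).2)
    obtain ⟨m, hm1, hm2⟩ := ((Filter.eventually_gt_atTop n).and
      (Filter.Tendsto.eventually_lt_const (by norm_num : (0:ℝ) < 1/20) (happrox q'))).exists
    set gA : A := p m - p n with hgAdef
    have hgsa : IsSelfAdjoint gA := (hsa m).sub (hsa n)
    have hg2 : gA * gA = gA := hgproj n m hm1.le
    have happ : ‖gA * q' - q'‖ ≤ 1/20 := by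
      have h3 : gA * q' = p m * q' := by rw [hgAdef, sub_mul, horth, sub_zero]
      rw [h3]; exact hm2.le
    obtain ⟨w, hw1, hw2, hesa, he2, hge, heg, -, c, hwc⟩ :=
      main_construction (B := Unitization ℂ A)
        (inr_sa hq'sa) (inr_idem hq'2) (inr_sa hgsa) (inr_idem hg2)
        (by rw [← Unitization.inr_mul, ← Unitization.inr_sub, Unitization.norm_inr]; exact happ)
    set t : Unitization ℂ A := (v₀ : Unitization ℂ A) * star w with htdef
    have hw1tail : ∀ x, star w * (w * x) = (q' : Unitization ℂ A) * x := fun x => by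
      rw [← mul_assoc, hw1]
    have hst : star t = w * star (v₀ : Unitization ℂ A) := by rw [htdef, star_mul, star_star]
    have ht1 : t * star t = ((p n : A) : Unitization ℂ A) := by
      calc t * star t
          = (v₀ : Unitization ℂ A) * (star w * (w * star (v₀ : Unitization ℂ A))) := by
            rw [htdef, hst]; simp only [mul_assoc]
        _ = (v₀ : Unitization ℂ A) * ((q' : Unitization ℂ A) * star (v₀ : Unitization ℂ A)) := by
            rw [hw1tail]
        _ = ((v₀ * (q' * star v₀) : A) : Unitization ℂ A) := by
            rw [Unitization.inr_mul, Unitization.inr_mul, Unitization.inr_star]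
        _ = ((p n : A) : Unitization ℂ A) := by
            congr 1
            rw [hq'v]
            calc v₀ * (star v₀ * v₀ * star v₀) = (v₀ * star v₀) * (v₀ * star v₀) := by
                  simp only [mul_assoc]
              _ = p n := by rw [← hv₀, (hproj n).2]
    have ht2 : star t * t = w * star w := by
      calc star t * t
          = w * (star (v₀ : Unitization ℂ A) * ((v₀ : Unitization ℂ A) * star w)) := by
            rw [hst, htdef]; simp only [mul_assoc]
        _ = w * (((star v₀ * v₀ : A) : Unitization ℂ A) * star w) := by
            rw [Unitization.inr_mul, Unitization.inr_star]; simp only [mul_assoc]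
        _ = (w * (q' : Unitization ℂ A)) * star w := by rw [← hq'v, mul_assoc]
        _ = w * star w := by rw [hw2]
    have hfst : t.fst = 0 := by
      rw [htdef, hwc]
      simp [Unitization.fst_mul, Unitization.fst_star, Unitization.fst_inr]
    have hT : ((t.snd : A) : Unitization ℂ A) = t := by
      conv_rhs => rw [← Unitization.inl_fst_add_inr_snd_eq t]
      rw [hfst, Unitization.inl_zero, zero_add]
    refine ⟨m, hm1, t.snd, ?_, ?_⟩
    · apply Unitization.inr_injective (R := ℂ)
      rw [Unitization.inr_mul, Unitization.inr_star, hT, ht1]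
    · have hle : (w * star w : Unitization ℂ A) ≤ ((gA : A) : Unitization ℂ A) :=
        proj_le_proj hesa (inr_sa hgsa) he2 (inr_idem hg2) hge heg
      rw [← Unitization.inr_le_iff _ _ (IsSelfAdjoint.star_mul_self t.snd) hgsa]
      rw [Unitization.inr_mul, Unitization.inr_star, hT, ht2]
      exact hle
  · intro hiii q hqsa hq2
    obtain ⟨n, hn⟩ := (Filter.Tendsto.eventually_lt_const
      (by norm_num : (0:ℝ) < 1/20) (happrox q)).exists
    obtain ⟨w, hw1, hw2, hesa, he2, hge, heg, hnorm, c, hwc⟩ :=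
      main_construction (B := Unitization ℂ A)
        (inr_sa hqsa) (inr_idem hq2) (inr_sa (hsa n)) (inr_idem (hproj n).2)
        (by rw [← Unitization.inr_mul, ← Unitization.inr_sub, Unitization.norm_inr]; exact hn.le)
    obtain ⟨u, hu1, hu2, hu3⟩ := exists_unitary (inr_sa hqsa) (inr_idem hq2) hesa he2 hnorm
    obtain ⟨m, hm, v₁, hv₁, hr₁⟩ := hiii n
    set gA : A := p m - p n with hgAdef
    have hgsa : IsSelfAdjoint gA := (hsa m).sub (hsa n)
    have hg2 : gA * gA = gA := hgproj n m hm.le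
    set E : Unitization ℂ A := w * star w with hEdef
    have hE2tail : ∀ x, E * (E * x) = E * x := fun x => by rw [← mul_assoc, he2]
    have hv₁g : (v₁ : Unitization ℂ A) * (gA : A) = (v₁ : Unitization ℂ A) :=
      mul_proj_eq_self (inr_sa hgsa) (inr_idem hg2)
        (by rw [← Unitization.inr_star, ← Unitization.inr_mul]
            exact (Unitization.inr_le_iff _ _ (IsSelfAdjoint.star_mul_self v₁) hgsa).mpr hr₁)
    have hpg : p n * gA = 0 := by
      rw [hgAdef, mul_sub, hincr n m hm.le, (hproj n).2, sub_self]
    have hEg0 : E * (gA : A) = 0 := by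
      calc E * (gA : A) = (E * ((p n : A) : Unitization ℂ A)) * (gA : A) := by rw [heg]
        _ = E * (((p n * gA : A) : Unitization ℂ A)) := by
            rw [mul_assoc, Unitization.inr_mul]
        _ = 0 := by rw [hpg, Unitization.inr_zero, mul_zero]
    set j : Unitization ℂ A := E * (v₁ : Unitization ℂ A) with hjdef
    have hEj : E * j = j := by rw [hjdef, ← mul_assoc, he2]
    set f : Unitization ℂ A := star j * j with hfdef
    have hfsa : IsSelfAdjoint f := IsSelfAdjoint.star_mul_self j
    have hjj : j * star j = E := by
      calc j * star j = E * (((v₁ : Unitization ℂ A) * star (v₁ : Unitization ℂ A)) * star E) := by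
            rw [hjdef, star_mul]; simp only [mul_assoc]
        _ = E * (((v₁ * star v₁ : A) : Unitization ℂ A) * star E) := by
            rw [Unitization.inr_mul, Unitization.inr_star]
        _ = (E * ((p n : A) : Unitization ℂ A)) * E := by rw [hv₁, hesa.star_eq, ← mul_assoc]
        _ = E * E := by rw [heg]
        _ = E := he2
    have hf2 : f * f = f := by
      calc f * f = star j * ((j * star j) * j) := by rw [hfdef]; simp only [mul_assoc]
        _ = star j * (E * j) := by rw [hjj]
        _ = star j * j := by rw [hEj]
        _ = f := hfdef.symm
    have hgf : (gA : A) * f = f := by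
      have hgv : (gA : A) * star (v₁ : Unitization ℂ A) = star (v₁ : Unitization ℂ A) := by
        have h4 := congrArg star hv₁g
        rwa [star_mul, (inr_sa hgsa).star_eq] at h4
      calc (gA : A) * f = ((gA : A) * star (v₁ : Unitization ℂ A)) * (star E * j) := by
            rw [hfdef, hjdef]; simp only [star_mul, star_star, mul_assoc]
        _ = star (v₁ : Unitization ℂ A) * (star E * j) := by rw [hgv]
        _ = f := by rw [hfdef, hjdef]; simp only [star_mul, star_star, mul_assoc]
    have hfg : f * (gA : A) = f := by
      have h4 := congrArg star hgf
      rwa [star_mul, hfsa.star_eq, (inr_sa hgsa).star_eq] at h4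
    have hEf : E * f = 0 := by
      have h5 : E * f = E * ((gA : A) * f) := by rw [hgf]
      rw [h5, ← mul_assoc, hEg0, zero_mul]
    set V : Unitization ℂ A := star w * (j * u) with hVdef
    set F : Unitization ℂ A := star u * (f * u) with hFdef
    have hsV : star V = (star u * star j) * w := by
      rw [hVdef, star_mul, star_mul, star_star]
    have hVV : V * star V = (q : A) := by
      have hEw : E * w = w := by
        calc E * w = w * (star w * w) := by rw [hEdef]; simp only [mul_assoc]
          _ = w * (q : A) := by rw [hw1]
          _ = w := hw2
      calc V * star V = star w * (j * ((u * star u) * (star j * w))) := by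
            rw [hVdef, hsV]; simp only [mul_assoc]
        _ = star w * ((j * star j) * w) := by rw [hu2, one_mul]; simp only [mul_assoc]
        _ = star w * (E * w) := by rw [hjj]
        _ = star w * w := by rw [hEw]
        _ = (q : A) := hw1
    have hVV2 : star V * V = F := by
      calc star V * V = star u * (star j * ((w * star w) * (j * u))) := by
            rw [hsV, hVdef]; simp only [mul_assoc]
        _ = star u * (star j * (E * (j * u))) := by rw [← hEdef]
        _ = star u * (star j * (j * u)) := by rw [← mul_assoc E j u, hEj]
        _ = F := by rw [hFdef, hfdef]; simp only [mul_assoc]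
    have hF2 : F * F = F := by
      calc F * F = star u * (f * ((u * star u) * (f * u))) := by
            rw [hFdef]; simp only [mul_assoc]
        _ = star u * ((f * f) * u) := by rw [hu2, one_mul]; simp only [mul_assoc]
        _ = F := by rw [hf2, hFdef]
    have hqF : (q : A) * F = 0 := by
      have hqu : (q : A) * star u = star u * E := by
        have h4 := congrArg star hu3
        rwa [star_mul, star_mul, (inr_sa hqsa).star_eq, hesa.star_eq] at h4
      calc (q : A) * F = ((q : A) * star u) * (f * u) := by rw [hFdef, ← mul_assoc]
        _ = star u * ((E * f) * u) := by rw [hqu]; simp only [mul_assoc]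
        _ = 0 := by rw [hEf, zero_mul, mul_zero]
    have hfst : V.fst = 0 := by
      rw [hVdef, hwc]
      simp [Unitization.fst_mul, Unitization.fst_star, Unitization.fst_inr]
    have hT : ((V.snd : A) : Unitization ℂ A) = V := by
      conv_rhs => rw [← Unitization.inl_fst_add_inr_snd_eq V]
      rw [hfst, Unitization.inl_zero, zero_add]
    refine ⟨star V.snd * V.snd, ⟨IsSelfAdjoint.star_mul_self V.snd, ?_⟩, ⟨V.snd, ?_, rfl⟩, ?_⟩
    · apply Unitization.inr_injective (R := ℂ)
      rw [Unitization.inr_mul, Unitization.inr_mul,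
        Unitization.inr_star, hT, hVV2, hF2]
    · apply Unitization.inr_injective (R := ℂ)
      rw [Unitization.inr_mul, Unitization.inr_star, hT, hVV]
    · apply Unitization.inr_injective (R := ℂ)
      rw [Unitization.inr_mul, Unitization.inr_mul, Unitization.inr_star, hT, hVV2,
        Unitization.inr_zero, hqF]
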